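/- For every natural number n, the identities A_n(X−i) + C_n(X) = (X−i)·Xⁿ and A_n(X+i) + C_n(X) = (X+i)·Xⁿ hold in the polynomial ring ℂ[X] (equivalently, they hold after evaluation at every complex number x). -/

import Mathlib

open Polynomial Finset

/-- The pair of polynomial sequences (Aₙ, Cₙ) from the paper:
A₀ = X, C₀ = 0, and
A_{n+1} = ((n+1)/(n+2))·(X·Aₙ + ∑_{k=0}^{n} λₙᵏ·A_k),
C_{n+1} = ((n+1)/(n+2))·((X²+1)·Xⁿ + ∑_{k=0}^{n} λₙᵏ·C_k),
where λₙᵏ is the coefficient of Xᵏ in Cₙ. -/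
noncomputable def AC : ℕ → Polynomial ℂ × Polynomial ℂ
  | 0 => (Polynomial.X, 0)
  | (n+1) =>
    (((n+1 : ℂ)/(n+2)) • (Polynomial.X * (AC n).1 +
        ∑ k ∈ (Finset.range (n+1)).attach, ((AC n).2.coeff k) • (AC k).1),
     ((n+1 : ℂ)/(n+2)) • ((Polynomial.X^2 + 1) * Polynomial.X^n +
        ∑ k ∈ (Finset.range (n+1)).attach, ((AC n).2.coeff k) • (AC k).2))
  decreasing_by
  all_goals first
    | exact Nat.lt_succ_self n
    | exact Nat.lt_succ_of_lt (Finset.mem_range.mp k.2)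
    | exact Finset.mem_range.mp k.2

noncomputable def polyA (n : ℕ) : Polynomial ℂ := (AC n).1
noncomputable def polyC (n : ℕ) : Polynomial ℂ := (AC n).2

lemma polyA_zero : polyA 0 = Polynomial.X := by rw [polyA, AC]
lemma polyC_zero : polyC 0 = 0 := by rw [polyC, AC]

lemma polyA_succ (n : ℕ) : polyA (n+1) = ((n+1 : ℂ)/(n+2)) • (Polynomial.X * polyA n +
    ∑ k ∈ (Finset.range (n+1)).attach, ((polyC n).coeff k) • polyA k) := by
  rw [polyA, AC]; rfl

lemma polyC_succ (n : ℕ) : polyC (n+1) = ((n+1 : ℂ)/(n+2)) • ((Polynomial.X^2 + 1) * Polynomial.X^n +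
    ∑ k ∈ (Finset.range (n+1)).attach, ((polyC n).coeff k) • polyC k) := by
  rw [polyC, AC]; rfl

lemma key : ∀ n : ℕ,
    (∀ e : ℂ, e^2 = -1 →
      (polyA n).comp (Polynomial.X + Polynomial.C e) + polyC n
        = (Polynomial.X + Polynomial.C e) * Polynomial.X ^ n) ∧
    (polyC n).natDegree ≤ n+1 ∧ (polyC n).coeff (n+1) = (n : ℂ)/(n+1) := by
  intro n
  induction n using Nat.strong_induction_on with
  | _ n ih =>
    match n with
    | 0 =>
      refine ⟨fun e he => ?_, ?_, ?_⟩ <;> simp [polyA_zero, polyC_zero]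
    | (n+1) =>
      obtain ⟨hId, hdeg, hcoeff⟩ := ih n (lt_add_one n)
      have hn1 : ((n : ℂ) + 1) ≠ 0 := by
        exact_mod_cast Nat.cast_add_one_ne_zero (R := ℂ) n
      have hn2 : ((n : ℂ) + 2) ≠ 0 := by
        have h : ((n : ℕ) + 2 : ℕ) ≠ 0 := Nat.succ_ne_zero (n+1)
        exact_mod_cast h
      -- representation of polyC n
      have hrep : polyC n = ∑ i ∈ Finset.range (n+2), ((polyC n).coeff i) • (Polynomial.X : Polynomial ℂ)^i := by
        conv_lhs => rw [(polyC n).as_sum_range' (n+2) (lt_of_le_of_lt hdeg (by omega))]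
        simp [Polynomial.smul_X_eq_monomial]
      have hsum : (∑ k ∈ (Finset.range (n+1)).attach, ((polyC n).coeff k) • (Polynomial.X : Polynomial ℂ)^(k : ℕ))
          = polyC n - ((n : ℂ)/(n+1)) • Polynomial.X^(n+1) := by
        rw [Finset.sum_attach (Finset.range (n+1)) (fun k => ((polyC n).coeff k) • (Polynomial.X : Polynomial ℂ)^k)]
        conv_rhs => rw [hrep, Finset.sum_range_succ, hcoeff]
        rw [add_sub_cancel_right]
      refine ⟨fun e he => ?_, ?_, ?_⟩
      · -- the identity
        rw [polyA_succ, polyC_succ]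
        simp only [Polynomial.smul_comp, Polynomial.add_comp, Polynomial.mul_comp,
          Polynomial.X_comp, Polynomial.sum_comp, Polynomial.smul_comp]
        have hcomb : (∑ k ∈ (Finset.range (n+1)).attach, ((polyC n).coeff k) • ((polyA k).comp (Polynomial.X + Polynomial.C e)))
            + (∑ k ∈ (Finset.range (n+1)).attach, ((polyC n).coeff k) • polyC (k : ℕ))
            = (Polynomial.X + Polynomial.C e) * (polyC n - ((n : ℂ)/(n+1)) • Polynomial.X^(n+1)) := by
          rw [← Finset.sum_add_distrib, ← hsum, Finset.mul_sum]
          refine Finset.sum_congr rfl fun k _ => ?_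
          rw [← smul_add, (ih k (Finset.mem_range.mp k.2)).1 e he,
            mul_smul_comm]
        have hA := hId e he
        have hf : ((n : ℂ)+1)/((n : ℂ)+2) * (2 - (n : ℂ)/((n : ℂ)+1)) = 1 := by
          field_simp; ring
        have hfC : Polynomial.C (((n : ℂ)+1)/((n : ℂ)+2)) * (2 - Polynomial.C ((n : ℂ)/((n : ℂ)+1))) = 1 := by
          have := congrArg Polynomial.C hf
          rw [map_mul, map_sub, map_ofNat, map_one] at this; exact this
        have heC : (Polynomial.C e : Polynomial ℂ)^2 = -1 := by
          rw [← map_pow, he]; simp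
        simp only [smul_eq_C_mul] at *
        push_cast
        linear_combination (Polynomial.C (((n : ℂ)+1)/((n : ℂ)+2))) * hcomb
          + (Polynomial.C (((n : ℂ)+1)/((n : ℂ)+2)) * (Polynomial.X + Polynomial.C e)) * hA
          + (Polynomial.C (((n : ℂ)+1)/((n : ℂ)+2)) * Polynomial.X^n) * heC
          + ((Polynomial.X + Polynomial.C e) * Polynomial.X^(n+1)) * hfC
      · -- degree bound
        rw [polyC_succ]
        refine (Polynomial.natDegree_smul_le _ _).trans ((Polynomial.natDegree_add_le _ _).trans (max_le ?_ ?_))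
        · refine (Polynomial.natDegree_mul_le).trans ?_
          have h1 : (Polynomial.X^2 + 1 : Polynomial ℂ).natDegree ≤ 2 :=
            (Polynomial.natDegree_add_le _ _).trans (by simp)
          have h2 : ((Polynomial.X : Polynomial ℂ)^n).natDegree ≤ n := by simp
          omega
        · refine Polynomial.natDegree_sum_le_of_forall_le _ _ fun k _ => ?_
          refine (Polynomial.natDegree_smul_le _ _).trans ?_
          have := (ih k (Finset.mem_range.mp k.2)).2.1
          have hk := Finset.mem_range.mp k.2
          omega
      · -- leading coefficient
        rw [polyC_succ, Polynomial.coeff_smul, Polynomial.coeff_add]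
        have h1 : ((Polynomial.X^2 + 1) * Polynomial.X^n : Polynomial ℂ).coeff (n+2) = 1 := by
          have : ((Polynomial.X^2 + 1) * Polynomial.X^n : Polynomial ℂ)
              = Polynomial.X^(n+2) + Polynomial.X^n := by ring
          rw [this, Polynomial.coeff_add, Polynomial.coeff_X_pow, Polynomial.coeff_X_pow]
          simp [Nat.ne_of_lt (by omega : n < n+2)]
        have h2 : (∑ k ∈ (Finset.range (n+1)).attach, ((polyC n).coeff k) • polyC (k : ℕ)).coeff (n+2) = 0 := by
          rw [Polynomial.finset_sum_coeff]
          refine Finset.sum_eq_zero fun k _ => ?_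
          rw [Polynomial.coeff_smul]
          have hdk := (ih k (Finset.mem_range.mp k.2)).2.1
          have hk := Finset.mem_range.mp k.2
          rw [Polynomial.coeff_eq_zero_of_natDegree_lt
            (show (polyC (k:ℕ)).natDegree < n+2 by omega)]
          simp
        rw [h1, h2]
        push_cast
        rw [smul_eq_mul]
        ring

theorem stmt2 (n : ℕ) :
    (polyA n).comp (Polynomial.X - Polynomial.C Complex.I) + polyC n =
      (Polynomial.X - Polynomial.C Complex.I) * Polynomial.X ^ n ∧
    (polyA n).comp (Polynomial.X + Polynomial.C Complex.I) + polyC n =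
      (Polynomial.X + Polynomial.C Complex.I) * Polynomial.X ^ n := by
  constructor
  · have h := (key n).1 (-Complex.I) (by simp [Complex.I_sq])
    simpa [sub_eq_add_neg, map_neg] using h
  · exact (key n).1 Complex.I Complex.I_sq
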